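/- arXiv:2202.11288 — 4 statements merged into one kernel-verified Lean document; each statement's English description precedes it below -/
import Mathlib

section
/- For each integer l ≥ 1, the trigonometric polynomial f_l(θ) = (2/l) * sum_{j=1}^{l} (2 - 2cos(jθ)) - (2 - 2cos(θ)) is nonnegative for all real θ. -/
open Real Finset

lemma abs_sin_nat_mul (l : ℕ) (x : ℝ) : |Real.sin (l * x)| ≤ l * |Real.sin x| := by
  induction l with
  | zero => simp
  | succ n ih =>
    have hs : ((n:ℝ)+1) * x = n * x + x := by ring
    push_cast
    rw [hs, Real.sin_add]
    have b1 : |Real.sin (n*x) * Real.cos x| ≤ |Real.sin (n*x)| := by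
      rw [abs_mul]; exact mul_le_of_le_one_right (abs_nonneg _) (Real.abs_cos_le_one x)
    have b2 : |Real.cos (n*x) * Real.sin x| ≤ |Real.sin x| := by
      rw [abs_mul]; exact mul_le_of_le_one_left (abs_nonneg _) (Real.abs_cos_le_one _)
    have := abs_add_le (Real.sin (n*x) * Real.cos x) (Real.cos (n*x) * Real.sin x)
    linarith

lemma sin_sq_sum_identity (x : ℝ) (l : ℕ) :
    2 * (Real.sin x)^2 * (∑ j ∈ Finset.Icc 1 l, (Real.sin (j*x))^2) - l * (Real.sin x)^4
      = (Real.sin x)^2 * (Real.sin (l*x))^2 + l * (Real.cos x)^2 * (Real.sin x)^2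
        - Real.cos x * Real.sin x * Real.sin (l*x) * Real.cos (l*x) := by
  induction l with
  | zero => simp
  | succ n ih =>
    rw [Finset.sum_Icc_succ_top (Nat.one_le_iff_ne_zero.mpr (Nat.succ_ne_zero n))]
    push_cast
    have hs : ((n:ℝ)+1) * x = n * x + x := by ring
    rw [hs, Real.sin_add, Real.cos_add]
    linear_combination ih
      + (Real.sin (n*x) * Real.cos (n*x) * Real.cos x * Real.sin x
          + (Real.cos (n*x))^2 * (Real.sin x)^2 - (Real.sin x)^2) * (Real.sin_sq_add_cos_sq x)
      + (Real.sin x)^2 * (Real.sin_sq_add_cos_sq (n*x))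

lemma key_nonneg (l : ℕ) (hl : 1 ≤ l) (x : ℝ) :
    0 ≤ (Real.sin x)^2 * (Real.sin (l*x))^2 + l * (Real.cos x)^2 * (Real.sin x)^2
        - Real.cos x * Real.sin x * Real.sin (l*x) * Real.cos (l*x) := by
  set s := Real.sin x with hsdef
  set c := Real.cos x with hcdef
  set S := Real.sin (l*x) with hSdef
  set C := Real.cos (l*x) with hCdef
  have h1 : s^2 + c^2 = 1 := Real.sin_sq_add_cos_sq x
  have h2 : S^2 + C^2 = 1 := Real.sin_sq_add_cos_sq (l*x)
  have hl1 : (1:ℝ) ≤ l := by exact_mod_cast hl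
  rcases le_or_gt 1 (4 * l * s^2) with hbig | hsmall
  · have hC1 : C^2 ≤ 1 := by nlinarith [sq_nonneg S]
    nlinarith [sq_nonneg (s*S - c*C/2),
      mul_nonneg (sq_nonneg c) (by linarith : (0:ℝ) ≤ 4*l*s^2 - C^2)]
  · set t := |s*S| with htdef
    set d := |c| with hddef
    have hS : |S| ≤ l * |s| := abs_sin_nat_mul l x
    have ht : t ≤ l * s^2 := by
      rw [htdef, abs_mul]
      calc |s| * |S| ≤ |s| * (l * |s|) := by
            exact mul_le_mul_of_nonneg_left hS (abs_nonneg s)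
        _ = l * s^2 := by rw [← sq_abs s]; ring
    have hts : t^2 = s^2 * S^2 := by rw [htdef, sq_abs]; ring
    have hd2 : d^2 = c^2 := sq_abs c
    have hd1 : d ≤ 1 := Real.abs_cos_le_one x
    have hd0 : 0 ≤ d := abs_nonneg _
    have ht0 : 0 ≤ t := abs_nonneg _
    have hcC : c*s*S*C ≤ d*t := by
      calc c*s*S*C ≤ |c*s*S*C| := le_abs_self _
        _ = d * t * |C| := by rw [show c*s*S*C = c*(s*S)*C by ring, abs_mul, abs_mul]
        _ ≤ d * t * 1 := by
            exact mul_le_mul_of_nonneg_left (Real.abs_cos_le_one _) (mul_nonneg hd0 ht0)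
        _ = d * t := by ring
    have hs2 : s^2 ≤ 1/(4:ℝ) := by nlinarith
    have hdge : 1 - s^2 ≤ d := by nlinarith [mul_nonneg hd0 (by linarith : (0:ℝ) ≤ 1 - d)]
    have hA : (0:ℝ) ≤ (l*s^2 - t)*(d - t - l*s^2) := by
      apply mul_nonneg
      · linarith
      · nlinarith
    have hB : (0:ℝ) ≤ l*s^2*(((l:ℝ)-1)*s^2 + 1 - d) := by
      apply mul_nonneg
      · positivity
      · nlinarith [sq_nonneg s]
    have expand : t^2 - d*t + l*d^2*s^2
        = (l*s^2 - t)*(d - t - l*s^2) + l*s^2*(((l:ℝ)-1)*s^2 + 1 - d) := by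
      have : d^2 = 1 - s^2 := by rw [hd2]; linarith
      rw [this]; ring
    have final : (0:ℝ) ≤ t^2 - d*t + l*d^2*s^2 := by linarith
    have : l * c^2 * s^2 = l*d^2*s^2 := by rw [hd2]
    linarith [hts, this, hcC, final]

/-- For each integer `l ≥ 1`, the trigonometric polynomial
`f_l(θ) = (2/l) ∑_{j=1}^{l} (2 - 2 cos(jθ)) - (2 - 2 cos θ)` is nonnegative. -/
theorem generating_function_nonneg (l : ℕ) (hl : 1 ≤ l) (θ : ℝ) :
    0 ≤ (2 / (l : ℝ)) * (∑ j ∈ Finset.Icc 1 l, (2 - 2 * Real.cos (j * θ)))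
          - (2 - 2 * Real.cos θ) := by
  have hl0 : (0:ℝ) < l := by exact_mod_cast hl
  set x := θ / 2 with hx
  have hcos : ∀ a : ℝ, Real.cos (2*a) = 1 - 2 * Real.sin a ^ 2 := by
    intro a
    have h1 := Real.cos_two_mul a
    have h := Real.sin_sq_add_cos_sq a
    nlinarith
  have hterm : ∀ j : ℕ, (2 - 2 * Real.cos (j * θ)) = 4 * Real.sin (j*x) ^ 2 := by
    intro j
    have h : (j:ℝ) * θ = 2 * (j * x) := by rw [hx]; ring
    rw [h, hcos]; ring
  have hθ2 : (2 - 2 * Real.cos θ) = 4 * Real.sin x ^ 2 := by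
    have h : θ = 2 * x := by rw [hx]; ring
    rw [h, hcos]; ring
  rw [hθ2, Finset.sum_congr rfl (fun j _ => hterm j)]
  rw [sub_nonneg, div_mul_eq_mul_div, le_div_iff₀ hl0]
  have h4 : (∑ j ∈ Finset.Icc 1 l, 4 * Real.sin (j*x)^2)
      = 4 * ∑ j ∈ Finset.Icc 1 l, Real.sin (j*x)^2 := (Finset.mul_sum _ _ _).symm
  rw [h4]
  have key := sin_sq_sum_identity x l
  have knn := key_nonneg l hl x
  have hsumnn : (0:ℝ) ≤ ∑ j ∈ Finset.Icc 1 l, Real.sin (j*x)^2 :=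
    Finset.sum_nonneg (fun j _ => sq_nonneg _)
  rcases eq_or_ne (Real.sin x) 0 with hs | hs
  · rw [hs]; nlinarith [hsumnn]
  · have hs2 : 0 < Real.sin x ^ 2 := by positivity
    nlinarith [key, knn, hs2]
end

section
/- For a symmetric positive definite matrix A with diagonal D, the damped Jacobi smoother S = I − ω D^{-1} A with 0 < ω < 2/η_0, where η_0 ≥ λ_max(D^{-1}A), satisfies ‖S x‖²_A ≤ ‖x‖²_A − η ‖A x‖²_{D^{-1}} for any η ≤ ω(2 − ω η_0). -/
open Matrix

private lemma rayleigh_bound' {n : ℕ} {M : Matrix (Fin n) (Fin n) ℝ} (hM : M.IsHermitian) {η₀ : ℝ}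
    (hev : ∀ i, hM.eigenvalues i ≤ η₀) (w : Fin n → ℝ) :
    w ⬝ᵥ M *ᵥ w ≤ η₀ * (w ⬝ᵥ w) := by
  set U : Matrix (Fin n) (Fin n) ℝ :=
    (Matrix.IsHermitian.eigenvectorUnitary hM : Matrix (Fin n) (Fin n) ℝ) with hUdef
  have hstar : star U = Uᵀ := by
    rw [star_eq_conjTranspose, conjTranspose_eq_transpose_of_trivial]
  have hUU : U * Uᵀ = 1 := by
    rw [← hstar]
    exact (Matrix.mem_unitaryGroup_iff).mp (Matrix.IsHermitian.eigenvectorUnitary hM).2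
  have hlhs : w ⬝ᵥ M *ᵥ w = ∑ i, hM.eigenvalues i * ((Uᵀ *ᵥ w) i)^2 := by
    conv_lhs => rw [hM.spectral_theorem, Unitary.conjStarAlgAut_apply, ← hUdef]
    rw [hstar, ← mulVec_mulVec, ← mulVec_mulVec, dotProduct_mulVec, ← mulVec_transpose]
    simp only [mulVec_diagonal, dotProduct, pow_two, Function.comp]
    refine Finset.sum_congr rfl fun i _ => ?_
    rw [RCLike.ofReal_real_eq_id, id]
    ring
  have hrhs : w ⬝ᵥ w = ∑ i, ((Uᵀ *ᵥ w) i)^2 := by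
    have h1 : ∑ i, ((Uᵀ *ᵥ w) i)^2 = (Uᵀ *ᵥ w) ⬝ᵥ (Uᵀ *ᵥ w) := by
      simp [dotProduct, pow_two]
    have h2 : (Uᵀ *ᵥ w) ⬝ᵥ (Uᵀ *ᵥ w) = w ⬝ᵥ (U * Uᵀ) *ᵥ w := by
      nth_rewrite 1 [mulVec_transpose]
      rw [← dotProduct_mulVec, mulVec_mulVec]
    rw [h1, h2, hUU, one_mulVec]
  rw [hlhs, hrhs, Finset.mul_sum]
  exact Finset.sum_le_sum fun i _ => mul_le_mul_of_nonneg_right (hev i) (sq_nonneg _)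

/-- Smoothing property of damped Jacobi: for a symmetric positive definite `A` with
diagonal `D`, the smoother `S = I - ω D⁻¹ A` with `0 < ω < 2/η₀`, where
`η₀ ≥ λ_max(D⁻¹A)`, satisfies `‖S x‖²_A ≤ ‖x‖²_A - η ‖A x‖²_{D⁻¹}` for any
`η ≤ ω (2 - ω η₀)`. -/
theorem damped_jacobi_smoothing {n : ℕ}
    (A : Matrix (Fin n) (Fin n) ℝ) (hA : A.PosDef)
    (Dinv : Matrix (Fin n) (Fin n) ℝ) (hDinv : Dinv = Matrix.diagonal fun i => (A i i)⁻¹)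
    (η₀ ω η : ℝ)
    (hη₀ : ∀ (μ : ℝ) (x : Fin n → ℝ), x ≠ 0 → (Dinv * A) *ᵥ x = μ • x → μ ≤ η₀)
    (hω0 : 0 < ω) (hω2 : ω < 2 / η₀)
    (hη : η ≤ ω * (2 - ω * η₀))
    (S : Matrix (Fin n) (Fin n) ℝ) (hS : S = 1 - ω • (Dinv * A)) :
    ∀ x : Fin n → ℝ,
      (S *ᵥ x) ⬝ᵥ A *ᵥ (S *ᵥ x) ≤ x ⬝ᵥ A *ᵥ x - η * ((A *ᵥ x) ⬝ᵥ Dinv *ᵥ (A *ᵥ x)) := by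
  have hApos : ∀ i, 0 < A i i := by
    intro i
    have hne : (Pi.single i 1 : Fin n → ℝ) ≠ 0 := by
      intro h
      simpa using congrFun h i
    have := hA.dotProduct_mulVec_pos hne
    simpa [dotProduct, mulVec, Pi.single_apply] using this
  have hAt : Aᵀ = A := by
    rw [← conjTranspose_eq_transpose_of_trivial]
    exact hA.1
  set e : Fin n → ℝ := fun i => Real.sqrt (A i i)⁻¹ with he
  have hepos : ∀ i, 0 < e i := fun i => Real.sqrt_pos.mpr (inv_pos.mpr (hApos i))
  set E : Matrix (Fin n) (Fin n) ℝ := diagonal e with hE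
  have hEE : E * E = Dinv := by
    rw [hE, diagonal_mul_diagonal, hDinv]
    exact congrArg diagonal (funext fun i =>
      Real.mul_self_sqrt (le_of_lt (inv_pos.mpr (hApos i))))
  have hEt : Eᵀ = E := diagonal_transpose e
  set M : Matrix (Fin n) (Fin n) ℝ := E * A * E with hM
  have hMherm : M.IsHermitian := by
    unfold Matrix.IsHermitian
    rw [conjTranspose_eq_transpose_of_trivial, hM, transpose_mul, transpose_mul, hEt, hAt,
      Matrix.mul_assoc]
  have hEsym : ∀ (v u : Fin n → ℝ), (E *ᵥ v) ⬝ᵥ u = v ⬝ᵥ (E *ᵥ u) := by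
    intro v u
    nth_rewrite 1 [← hEt]
    rw [mulVec_transpose, ← dotProduct_mulVec]
  have hev : ∀ i, hMherm.eigenvalues i ≤ η₀ := by
    intro i
    set v : Fin n → ℝ := ⇑(hMherm.eigenvectorBasis i) with hv
    have hvne : v ≠ 0 := by
      intro h
      have h0 : hMherm.eigenvectorBasis i = 0 := by
        ext j
        exact congrFun h j
      exact hMherm.eigenvectorBasis.toBasis.ne_zero i (by simpa using h0)
    have heig : M *ᵥ v = hMherm.eigenvalues i • v := hMherm.mulVec_eigenvectorBasis i
    have hEv : E *ᵥ v ≠ 0 := by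
      intro h
      apply hvne
      funext j
      have hj : e j * v j = 0 := by
        have h' := congrFun h j
        simpa [hE, mulVec_diagonal] using h'
      have hvj : v j = 0 := by
        rcases mul_eq_zero.mp hj with h' | h'
        · exact absurd h' (hepos j).ne'
        · exact h'
      simpa using hvj
    refine hη₀ _ (E *ᵥ v) hEv ?_
    have key : (Dinv * A) *ᵥ (E *ᵥ v) = E *ᵥ (M *ᵥ v) := by
      simp only [mulVec_mulVec, hM, ← hEE, Matrix.mul_assoc]
    rw [key, heig, mulVec_smul]
  intro x
  set y : Fin n → ℝ := A *ᵥ x with hy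
  set w : Fin n → ℝ := E *ᵥ y with hw
  set z : Fin n → ℝ := Dinv *ᵥ y with hz
  have hzEw : z = E *ᵥ w := by
    rw [hz, hw]
    conv_rhs => rw [mulVec_mulVec, hEE]
  set t : ℝ := y ⬝ᵥ Dinv *ᵥ y with ht
  have htw : t = w ⬝ᵥ w := by
    rw [ht, hw]
    conv_lhs => rw [← hEE, ← mulVec_mulVec, ← hEsym]
  have ht0 : 0 ≤ t := by
    rw [htw]
    exact Finset.sum_nonneg fun i _ => mul_self_nonneg _
  set s : ℝ := z ⬝ᵥ A *ᵥ z with hs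
  have hsw : s = w ⬝ᵥ M *ᵥ w := by
    rw [hs, hzEw, hEsym, hM]
    conv_rhs => rw [← mulVec_mulVec, ← mulVec_mulVec]
  have hst : s ≤ η₀ * t := by
    rw [hsw, htw]
    exact rayleigh_bound' hMherm hev w
  have hSx : S *ᵥ x = x - ω • z := by
    rw [hS, sub_mulVec, one_mulVec, smul_mulVec, ← mulVec_mulVec, ← hy, ← hz]
  have hxAz : x ⬝ᵥ A *ᵥ z = y ⬝ᵥ z := by
    rw [dotProduct_mulVec, ← mulVec_transpose, hAt, ← hy]
  have hzAx : z ⬝ᵥ A *ᵥ x = y ⬝ᵥ z := by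
    rw [← hy, dotProduct_comm]
  have hyz : y ⬝ᵥ z = t := by rw [ht, hz]
  have hexp : (S *ᵥ x) ⬝ᵥ A *ᵥ (S *ᵥ x) = x ⬝ᵥ A *ᵥ x - 2*ω*t + ω^2*s := by
    rw [hSx, mulVec_sub, mulVec_smul, sub_dotProduct, dotProduct_sub, dotProduct_sub,
      smul_dotProduct, dotProduct_smul, dotProduct_smul, smul_dotProduct]
    rw [hxAz, hzAx, hyz]
    simp only [smul_eq_mul, ← hs]
    ring
  rw [hexp, hy]
  have h1 : ω^2 * s ≤ ω^2 * (η₀ * t) := mul_le_mul_of_nonneg_left hst (sq_nonneg ω)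
  have h2 : η * t ≤ ω * (2 - ω * η₀) * t := mul_le_mul_of_nonneg_right hη ht0
  nlinarith [h1, h2]
end

section
/- For a symmetric positive definite matrix A with diagonal D, the Jacobi iteration (S = I − D^{-1}A) converges if and only if 2D − A is positive definite. -/
set_option maxHeartbeats 1000000

open Matrix

private lemma mulVec_ofReal' {n : ℕ} (P : Matrix (Fin n) (Fin n) ℝ) (w : Fin n → ℝ) :
    (P.map Complex.ofReal) *ᵥ (fun i => (w i : ℂ)) = fun i => ((P *ᵥ w) i : ℂ) := by
  funext i
  simp [mulVec, dotProduct, Matrix.map]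

private lemma conj_posDef' {n : ℕ} {M P : Matrix (Fin n) (Fin n) ℝ} (hM : M.PosDef)
    (hP : Function.Injective (Pᵀ.mulVec)) : (P * M * Pᵀ).PosDef := by
  have hmapid : ∀ (Q : Matrix (Fin n) (Fin n) ℝ), Q.map (starRingEnd ℝ) = Q := fun Q => by
    ext; simp
  refine PosDef.of_dotProduct_mulVec_pos ?_ ?_
  · have h1 : Mᵀ = M := hM.1
    show (P * M * Pᵀ)ᴴ = _
    simp [conjTranspose, Matrix.transpose_mul, Matrix.mul_assoc, h1, hmapid]
  · intro x hx
    have hx' : Pᵀ *ᵥ x ≠ 0 := by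
      intro h
      exact hx (hP (by simpa using h))
    have h2 := hM.dotProduct_mulVec_pos hx'
    have key : x ᵥ* (P * M * Pᵀ) = (Pᵀ *ᵥ x) ᵥ* (M * Pᵀ) := by
      rw [Matrix.mul_assoc, ← vecMul_vecMul]
      rw [← transpose_transpose P, vecMul_transpose, transpose_transpose]
    have key2 : (Pᵀ *ᵥ x) ᵥ* (M * Pᵀ) ⬝ᵥ x = (Pᵀ *ᵥ x) ⬝ᵥ (M *ᵥ (Pᵀ *ᵥ x)) := by
      rw [← dotProduct_mulVec, mulVec_mulVec]
    calc (0:ℝ) < star (Pᵀ *ᵥ x) ⬝ᵥ (M *ᵥ (Pᵀ *ᵥ x)) := h2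
    _ = star x ⬝ᵥ ((P * M * Pᵀ) *ᵥ x) := by
        rw [star_trivial, star_trivial, ← key2, ← key, dotProduct_mulVec]

private lemma quad_ofReal' {n : ℕ} (M : Matrix (Fin n) (Fin n) ℝ) (hM : Mᵀ = M) (y : Fin n → ℂ) :
    star y ⬝ᵥ ((M.map Complex.ofReal) *ᵥ y) =
      (((fun i => (y i).re) ⬝ᵥ (M *ᵥ fun i => (y i).re)
        + (fun i => (y i).im) ⬝ᵥ (M *ᵥ fun i => (y i).im) : ℝ) : ℂ) := by
  have hsym : ∀ i j, M j i = M i j := fun i j => congrFun (congrFun hM i) j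
  have expand : star y ⬝ᵥ ((M.map Complex.ofReal) *ᵥ y)
      = ∑ i, ∑ j, (M i j : ℂ) * ((starRingEnd ℂ) (y i) * y j) := by
    simp [dotProduct, mulVec, Matrix.map, Finset.mul_sum]
    congr 1; funext i; congr 1; funext j; ring
  rw [expand]
  have him : (∑ i, ∑ j, (M i j : ℂ) * ((starRingEnd ℂ) (y i) * y j)).im = 0 := by
    set T := ∑ i, ∑ j, (M i j : ℂ) * ((starRingEnd ℂ) (y i) * y j) with hT
    have hconj : (starRingEnd ℂ) T = T := by
      rw [hT, map_sum]
      rw [Finset.sum_comm]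
      congr 1; funext i
      rw [map_sum]
      congr 1; funext j
      rw [hsym]
      simp only [_root_.map_mul, Complex.conj_ofReal, Complex.conj_conj]
      ring
    exact Complex.conj_eq_iff_im.mp hconj
  apply Complex.ext
  · simp [Complex.re_sum, dotProduct, mulVec, Finset.mul_sum]
    rw [← Finset.sum_add_distrib]
    congr 1; funext i
    rw [← Finset.sum_add_distrib]
    congr 1; funext j
    ring
  · simpa using him

private lemma quad_ofReal_pos' {n : ℕ} {M : Matrix (Fin n) (Fin n) ℝ} (hM : M.PosDef)
    {y : Fin n → ℂ} (hy : y ≠ 0) :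
    ∃ r : ℝ, 0 < r ∧ star y ⬝ᵥ ((M.map Complex.ofReal) *ᵥ y) = (r : ℂ) := by
  have hMsym : Mᵀ = M := by
    have := hM.1
    rwa [IsHermitian, conjTranspose_eq_transpose_of_trivial] at this
  set a : Fin n → ℝ := fun i => (y i).re with ha
  set b : Fin n → ℝ := fun i => (y i).im with hb
  refine ⟨a ⬝ᵥ (M *ᵥ a) + b ⬝ᵥ (M *ᵥ b), ?_, quad_ofReal' M hMsym y⟩
  have hnz : a ≠ 0 ∨ b ≠ 0 := by
    by_contra h
    push_neg at h
    apply hy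
    funext i
    have h1 : a i = 0 := by rw [h.1]; rfl
    have h2 : b i = 0 := by rw [h.2]; rfl
    exact Complex.ext h1 h2
  have pda : ∀ x : Fin n → ℝ, x ≠ 0 → 0 < x ⬝ᵥ (M *ᵥ x) := fun x hx => by
    simpa [star_trivial] using hM.dotProduct_mulVec_pos hx
  have psd : ∀ x : Fin n → ℝ, 0 ≤ x ⬝ᵥ (M *ᵥ x) := fun x => by
    simpa [star_trivial] using hM.posSemidef.dotProduct_mulVec_nonneg x
  rcases hnz with h | h
  · exact add_pos_of_pos_of_nonneg (pda a h) (psd b)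
  · exact add_pos_of_nonneg_of_pos (psd a) (pda b h)

private lemma diag_mulVec_inj' {n : ℕ} {d : Fin n → ℝ} (hd : ∀ i, d i ≠ 0) :
    Function.Injective (Matrix.diagonal d).mulVec := by
  apply Matrix.mulVec_injective_iff_isUnit.mpr
  rw [Matrix.isUnit_iff_isUnit_det, det_diagonal]
  exact (Finset.prod_ne_zero_iff.mpr fun i _ => hd i).isUnit

/-- For a symmetric positive definite `A` with diagonal part `D`, the Jacobi
iteration `S = I - D⁻¹A` converges (every complex eigenvalue of `S` has modulus
`< 1`) if and only if `2D - A` is positive definite. -/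
theorem jacobi_converges_iff {n : ℕ}
    (A : Matrix (Fin n) (Fin n) ℝ) (hA : A.PosDef)
    (D : Matrix (Fin n) (Fin n) ℝ) (hD : D = Matrix.diagonal fun i => A i i)
    (hDpos : ∀ i, 0 < A i i)
    (S : Matrix (Fin n) (Fin n) ℝ)
    (hS : S = 1 - (Matrix.diagonal fun i => (A i i)⁻¹) * A) :
    (∀ (μ : ℂ) (x : Fin n → ℂ), x ≠ 0 →
        (S.map (Complex.ofReal)) *ᵥ x = μ • x → ‖μ‖ < 1)
      ↔ ((2 : ℝ) • D - A).PosDef := by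
  classical
  set e : Fin n → ℝ := fun i => Real.sqrt (A i i) with he_def
  have he : ∀ i, 0 < e i := fun i => Real.sqrt_pos.mpr (hDpos i)
  set E : Matrix (Fin n) (Fin n) ℝ := diagonal e with hE_def
  set F : Matrix (Fin n) (Fin n) ℝ := diagonal (fun i => (e i)⁻¹) with hF_def
  have hEt : Eᵀ = E := diagonal_transpose e
  have hFt : Fᵀ = F := diagonal_transpose _
  have hEF : E * F = 1 := by
    rw [hE_def, hF_def, diagonal_mul_diagonal, ← diagonal_one]
    exact congrArg diagonal (funext fun i => mul_inv_cancel₀ (he i).ne')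
  have hFE : F * E = 1 := by
    rw [hE_def, hF_def, diagonal_mul_diagonal, ← diagonal_one]
    exact congrArg diagonal (funext fun i => inv_mul_cancel₀ (he i).ne')
  have hEE : E * E = D := by
    rw [hE_def, hD, diagonal_mul_diagonal]
    exact congrArg diagonal (funext fun i => Real.mul_self_sqrt (hDpos i).le)
  have hFF : F * F = diagonal (fun i => (A i i)⁻¹) := by
    rw [hF_def, diagonal_mul_diagonal]
    exact congrArg diagonal (funext fun i => by
      rw [← mul_inv, Real.mul_self_sqrt (hDpos i).le])
  set B : Matrix (Fin n) (Fin n) ℝ := F * A * F with hB_def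
  have hFinj : Function.Injective F.mulVec := diag_mulVec_inj' (fun i => inv_ne_zero (he i).ne')
  have hEinj : Function.Injective E.mulVec := diag_mulVec_inj' (fun i => (he i).ne')
  have hBpd : B.PosDef := by
    have h := conj_posDef' hA (M := A) (P := F)
      (by rw [hFt]; exact hFinj)
    rw [hFt] at h
    rw [hB_def]; exact h
  have hSid : S = F * (1 - B) * E := by
    have h1 : F * (1 - B) * E = F * E - F * B * E := by noncomm_ring
    have h2 : F * B * E = (F * F) * A * (F * E) := by rw [hB_def]; noncomm_ring
    rw [h1, h2, hFE, hFF, mul_one, hS]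
  have h1B : (1 : Matrix (Fin n) (Fin n) ℝ) - B = E * S * F := by
    rw [hSid]
    have hrecomb : E * (F * (1 - B) * E) * F = (E * F) * (1 - B) * (E * F) := by noncomm_ring
    rw [hrecomb, hEF, one_mul, mul_one]
  set N : Matrix (Fin n) (Fin n) ℝ := (2 : ℝ) • (1 : Matrix (Fin n) (Fin n) ℝ) - B with hN_def
  have hNF : N = F * ((2 : ℝ) • D - A) * F := by
    have h1 : F * ((2 : ℝ) • D - A) * F = (2 : ℝ) • (F * D * F) - F * A * F := by
      rw [Matrix.mul_sub, Matrix.sub_mul, Matrix.mul_smul, Matrix.smul_mul]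
    have h2 : F * D * F = 1 := by
      rw [← hEE]
      calc F * (E * E) * F = (F * E) * (E * F) := by noncomm_ring
      _ = 1 := by rw [hFE, hEF, mul_one]
    rw [h1, h2, hN_def, hB_def]
  have hNE : (2 : ℝ) • D - A = E * N * E := by
    have h1 : E * N * E = (2 : ℝ) • (E * 1 * E) - E * B * E := by
      rw [hN_def, Matrix.mul_sub, Matrix.sub_mul, Matrix.mul_smul, Matrix.smul_mul]
    have h2 : E * B * E = A := by
      rw [hB_def]
      calc E * (F * A * F) * E = (E * F) * A * (F * E) := by noncomm_ring
      _ = A := by rw [hEF, hFE, one_mul, mul_one]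
    rw [h1, h2, mul_one, hEE]
  constructor
  · -- convergence → posdef
    intro hconv
    have hAt : Aᵀ = A := by
      have := hA.1
      rwa [IsHermitian, conjTranspose_eq_transpose_of_trivial] at this
    have hBt : Bᵀ = B := by
      rw [hB_def, Matrix.transpose_mul, Matrix.transpose_mul, hFt, hAt, Matrix.mul_assoc]
    have hNherm : N.IsHermitian := by
      rw [IsHermitian, conjTranspose_eq_transpose_of_trivial, hN_def,
        Matrix.transpose_sub, Matrix.transpose_smul, Matrix.transpose_one, hBt]
    -- every eigenvalue of N is positive
    have heigpos : ∀ i, 0 < hNherm.eigenvalues i := by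
      intro i
      set ν : ℝ := hNherm.eigenvalues i with hν
      set v : Fin n → ℝ := ⇑(hNherm.eigenvectorBasis i) with hv_def
      have hv : N *ᵥ v = ν • v := hNherm.mulVec_eigenvectorBasis i
      have hvne : v ≠ 0 := by
        intro h
        apply hNherm.eigenvectorBasis.orthonormal.ne_zero i
        ext j
        exact congrFun h j
      have hBv : B *ᵥ v = (2 : ℝ) • v - ν • v := by
        have : N *ᵥ v = (2 : ℝ) • v - B *ᵥ v := by
          rw [hN_def, Matrix.sub_mulVec, Matrix.smul_mulVec, Matrix.one_mulVec]
        rw [this] at hv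
        linear_combination (norm := module) - hv
      have hSFv : S *ᵥ (F *ᵥ v) = (ν - 1) • (F *ᵥ v) := by
        have hSF : S * F = F * (1 - B) := by
          rw [hSid]
          have : F * (1 - B) * E * F = F * (1 - B) * (E * F) := by rw [Matrix.mul_assoc]
          rw [this, hEF, Matrix.mul_one]
        rw [mulVec_mulVec, hSF, ← mulVec_mulVec]
        have h1Bv : (1 - B) *ᵥ v = (ν - 1) • v := by
          rw [Matrix.sub_mulVec, Matrix.one_mulVec, hBv]
          module
        rw [h1Bv, mulVec_smul]
      set x : Fin n → ℂ := fun j => ((F *ᵥ v) j : ℂ) with hx_def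
      have hxne : x ≠ 0 := by
        intro h
        apply hvne
        have hFv : F *ᵥ v = 0 := by
          funext j
          have hj := congrFun h j
          rw [hx_def] at hj
          simpa using hj
        have : E *ᵥ (F *ᵥ v) = v := by rw [mulVec_mulVec, hEF, Matrix.one_mulVec]
        rw [hFv] at this
        rw [← this]
        simp
      have hevx : (S.map Complex.ofReal) *ᵥ x = ((ν - 1 : ℝ) : ℂ) • x := by
        rw [hx_def, mulVec_ofReal', hSFv]
        funext j
        simp [Complex.ofReal_mul]
      have habs := hconv _ x hxne hevx
      rw [Complex.norm_real, Real.norm_eq_abs] at habs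
      have := abs_lt.mp habs
      linarith [this.1]
    -- N is posdef via the spectral theorem
    have hNpd : N.PosDef := by
      have hspec := hNherm.spectral_theorem
      set U : Matrix (Fin n) (Fin n) ℝ := ↑(hNherm.eigenvectorUnitary) with hU_def
      have hUunit : IsUnit U := ⟨Unitary.toUnits hNherm.eigenvectorUnitary, rfl⟩
      have hstarU : star U = Uᵀ := by
        rw [Matrix.star_eq_conjTranspose, conjTranspose_eq_transpose_of_trivial]
      have hdiagpd : (diagonal (RCLike.ofReal ∘ hNherm.eigenvalues) :
          Matrix (Fin n) (Fin n) ℝ).PosDef := by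
        rw [posDef_diagonal_iff]
        intro i
        simpa using heigpos i
      have hUtinj : Function.Injective (Uᵀ.mulVec) := by
        apply Matrix.mulVec_injective_iff_isUnit.mpr
        rwa [Matrix.isUnit_iff_isUnit_det, Matrix.det_transpose, ← Matrix.isUnit_iff_isUnit_det]
      have := conj_posDef' hdiagpd hUtinj
      rw [← hstarU] at this
      rw [hspec]; exact this
    have h := conj_posDef' hNpd (M := N) (P := E) (by rw [hEt]; exact hEinj)
    rw [hEt] at h
    rw [hNE]; exact h
  · -- posdef → convergence
    intro hPD μ x hx hev
    have hNpd : N.PosDef := by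
      have h := conj_posDef' hPD (P := F) (by rw [hFt]; exact hFinj)
      rw [hFt] at h
      rw [hNF]; exact h
    set y : Fin n → ℂ := (E.map Complex.ofReal) *ᵥ x with hy_def
    have hmapmul : ∀ (P Q : Matrix (Fin n) (Fin n) ℝ),
        (P * Q).map Complex.ofReal = P.map Complex.ofReal * Q.map Complex.ofReal := by
      intro P Q
      exact Matrix.map_mul (f := Complex.ofRealHom)
    have hmapone : (1 : Matrix (Fin n) (Fin n) ℝ).map Complex.ofReal
        = (1 : Matrix (Fin n) (Fin n) ℂ) := by
      exact Matrix.map_one _ Complex.ofReal_zero Complex.ofReal_one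
    have hyne : y ≠ 0 := by
      intro h
      apply hx
      have : (F.map Complex.ofReal) *ᵥ y = x := by
        rw [hy_def, mulVec_mulVec, ← hmapmul, hFE, hmapone, Matrix.one_mulVec]
      rw [h] at this
      rw [← this]
      simp
    have heig1B : ((1 - B).map Complex.ofReal) *ᵥ y = μ • y := by
      rw [h1B, hmapmul, hmapmul, hy_def, mulVec_mulVec]
      have hcol : E.map Complex.ofReal * S.map Complex.ofReal * F.map Complex.ofReal *
          E.map Complex.ofReal = E.map Complex.ofReal * S.map Complex.ofReal := by
        rw [Matrix.mul_assoc, ← hmapmul F E, hFE, hmapone, Matrix.mul_one]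
      rw [hcol, ← mulVec_mulVec, hev, mulVec_smul]
    obtain ⟨rc, hrc, hrc_eq⟩ := quad_ofReal_pos' Matrix.PosDef.one hyne
    obtain ⟨rb, hrb, hrb_eq⟩ := quad_ofReal_pos' hBpd hyne
    obtain ⟨rn, hrn, hrn_eq⟩ := quad_ofReal_pos' hNpd hyne
    rw [hmapone, Matrix.one_mulVec] at hrc_eq
    -- relation: rn = 2 rc - rb
    have hNmap : N.map Complex.ofReal = (2 : ℂ) • (1 : Matrix (Fin n) (Fin n) ℂ)
        - B.map Complex.ofReal := by
      rw [hN_def]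
      ext i j
      simp only [Matrix.map_apply, Matrix.sub_apply, Matrix.smul_apply, Matrix.one_apply,
        smul_eq_mul]
      split_ifs <;> push_cast <;> ring
    have hrel : (rn : ℂ) = 2 * rc - rb := by
      rw [← hrn_eq, hNmap, Matrix.sub_mulVec, Matrix.smul_mulVec, Matrix.one_mulVec,
        dotProduct_sub, dotProduct_smul, hrc_eq, hrb_eq, smul_eq_mul]
    have hrel' : rn = 2 * rc - rb := by exact_mod_cast hrel
    -- eigen relation: rc - rb = μ * rc
    have heq : (rc : ℂ) - rb = μ * rc := by
      have h1 : star y ⬝ᵥ (((1 - B).map Complex.ofReal) *ᵥ y) = (rc : ℂ) - rb := by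
        have : (1 - B).map Complex.ofReal = 1 - B.map Complex.ofReal := by
          rw [Matrix.map_sub _ (fun a b => Complex.ofReal_sub a b), hmapone]
        rw [this, Matrix.sub_mulVec, Matrix.one_mulVec, dotProduct_sub, hrc_eq, hrb_eq]
      rw [heig1B, dotProduct_smul, hrc_eq, smul_eq_mul] at h1
      rw [← h1]
    have hμ : μ = (((rc - rb) / rc : ℝ) : ℂ) := by
      have hrcne : (rc : ℂ) ≠ 0 := Complex.ofReal_ne_zero.mpr hrc.ne'
      push_cast
      rw [eq_div_iff hrcne]
      exact heq.symm
    rw [hμ, Complex.norm_real, Real.norm_eq_abs, abs_div, abs_of_pos hrc, div_lt_one hrc, abs_lt]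
    constructor <;> linarith
end

section
/- For the standard linear interpolation prolongation, the interpolation error of injecting even-indexed values satisfies, for every x ∈ R^{2m+1}: sum over odd indices i of (x_i − (x_{i-1} + x_{i+1})/2)² ≤ (1/2) x^T L x, where L = tridiag(−1, 2, −1) of size (2m+1)×(2m+1). -/
private lemma pairsum (f : ℕ → ℝ) : ∀ N : ℕ,
    ∑ i ∈ Finset.range (2 * N), f i = ∑ j ∈ Finset.range N, (f (2 * j) + f (2 * j + 1))
  | 0 => by simp
  | (N + 1) => by
    rw [show 2 * (N + 1) = (2 * N + 1) + 1 from by ring, Finset.sum_range_succ,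
      Finset.sum_range_succ, Finset.sum_range_succ, pairsum f N]
    ring

/-- Interpolation error bound for linear interpolation of even-indexed values:
for `n = 2m + 1` and `L = tridiag(-1, 2, -1)` (indices `1, …, n`, with the
convention `x_0 = x_{2m+2} = 0`),
`∑_{j=0}^{m} (x_{2j+1} - (x_{2j} + x_{2j+2})/2)² ≤ (1/2) xᵀ L x`. -/
theorem interpolation_error_bound (m : ℕ) (hm : 1 ≤ m) (x : ℕ → ℝ)
    (hx0 : x 0 = 0) (hxend : x (2 * m + 2) = 0) :
    ∑ j ∈ Finset.range (m + 1), (x (2 * j + 1) - (x (2 * j) + x (2 * j + 2)) / 2) ^ 2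
      ≤ (1 / 2) * ∑ i ∈ Finset.Icc 1 (2 * m + 1), ∑ k ∈ Finset.Icc 1 (2 * m + 1),
          x i * (if i = k then (2 : ℝ) else if |(i : ℤ) - (k : ℤ)| = 1 then -1 else 0) * x k := by
  set n := 2 * m + 1 with hn
  -- Step 1: inner sums
  have hinner : ∀ i ∈ Finset.Icc 1 n,
      (∑ k ∈ Finset.Icc 1 n,
        x i * (if i = k then (2 : ℝ) else if |(i : ℤ) - (k : ℤ)| = 1 then -1 else 0) * x k)
      = 2 * x i * x i - x i * x (i - 1) - x i * x (i + 1) := by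
    intro i hi
    rw [Finset.mem_Icc] at hi
    have hpt : ∀ k ∈ Finset.Icc 1 n,
        x i * (if i = k then (2 : ℝ) else if |(i : ℤ) - (k : ℤ)| = 1 then -1 else 0) * x k
        = ((if k = i then 2 * x i * x i else 0) + (if k + 1 = i then -(x i * x k) else 0))
          + (if k = i + 1 then -(x i * x k) else 0) := by
      intro k hk
      rw [Finset.mem_Icc] at hk
      by_cases h1 : i = k
      · subst h1
        rw [if_pos rfl, if_pos rfl, if_neg (by omega), if_neg (by omega)]
        ring
      · by_cases h2 : k + 1 = i
        · have habs : |(i : ℤ) - (k : ℤ)| = 1 := by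
            rw [abs_eq (by norm_num : (0:ℤ) ≤ 1)]; omega
          rw [if_neg h1, if_pos habs, if_neg (fun h => h1 h.symm), if_pos h2,
            if_neg (by omega)]
          ring
        · by_cases h3 : k = i + 1
          · have habs : |(i : ℤ) - (k : ℤ)| = 1 := by
              rw [abs_eq (by norm_num : (0:ℤ) ≤ 1)]; omega
            rw [if_neg h1, if_pos habs, if_neg (fun h => h1 h.symm), if_neg h2, if_pos h3]
            ring
          · have habs : ¬ (|(i : ℤ) - (k : ℤ)| = 1) := by
              rw [abs_eq (by norm_num : (0:ℤ) ≤ 1)]; omega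
            rw [if_neg h1, if_neg habs, if_neg (fun h => h1 h.symm), if_neg h2, if_neg h3]
            ring
    rw [Finset.sum_congr rfl hpt]
    simp only [Finset.sum_add_distrib]
    have e1 : (∑ k ∈ Finset.Icc 1 n, if k = i then 2 * x i * x i else 0) = 2 * x i * x i := by
      rw [Finset.sum_ite_eq' (Finset.Icc 1 n) i (fun _ => 2 * x i * x i),
        if_pos (Finset.mem_Icc.mpr ⟨hi.1, hi.2⟩)]
    have hshift : ∀ k : ℕ, (k + 1 = i) = (k = i - 1) := fun k => propext (by omega)
    have e2 : (∑ k ∈ Finset.Icc 1 n, if k + 1 = i then -(x i * x k) else 0)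
        = -(x i * x (i - 1)) := by
      simp only [hshift]
      rw [Finset.sum_ite_eq' (Finset.Icc 1 n) (i - 1) (fun k => -(x i * x k))]
      by_cases hb : 2 ≤ i
      · rw [if_pos (Finset.mem_Icc.mpr ⟨by omega, by omega⟩)]
      · have : i = 1 := by omega
        subst this
        rw [if_neg (by simp), hx0]
        ring
    have e3 : (∑ k ∈ Finset.Icc 1 n, if k = i + 1 then -(x i * x k) else 0)
        = -(x i * x (i + 1)) := by
      rw [Finset.sum_ite_eq' (Finset.Icc 1 n) (i + 1) (fun k => -(x i * x k))]
      by_cases hb : i + 1 ≤ n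
      · rw [if_pos (Finset.mem_Icc.mpr ⟨by omega, hb⟩)]
      · have : i = n := by omega
        subst this
        rw [if_neg (by simp [Finset.mem_Icc]), show n + 1 = 2 * m + 2 from by omega, hxend]
        ring
    rw [e1, e2, e3]
    ring
  rw [Finset.sum_congr rfl hinner]
  -- Step 2: quadratic form = sum of squared differences
  have hS : (∑ i ∈ Finset.Icc 1 n, (2 * x i * x i - x i * x (i - 1) - x i * x (i + 1)))
      = ∑ j ∈ Finset.range n, (2 * x (j + 1) * x (j + 1) - x (j + 1) * x j - x (j + 1) * x (j + 2)) := by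
    rw [show Finset.Icc 1 n = Finset.Ico 1 (n + 1) from (Finset.Ico_add_one_right_eq_Icc 1 n).symm,
      Finset.sum_Ico_eq_sum_range]
    apply Finset.sum_congr (by norm_num) fun j _ => ?_
    rw [show 1 + j = j + 1 from by omega, show j + 1 - 1 = j from by omega,
      show j + 1 + 1 = j + 2 from by omega]
  have tele : ∑ j ∈ Finset.range n,
      ((x (j + 1) - x j) ^ 2 - (2 * x (j + 1) * x (j + 1) - x (j + 1) * x j - x (j + 1) * x (j + 2)))
      = (x 0 ^ 2 - x 0 * x 1) - (x n ^ 2 - x n * x (n + 1)) := by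
    rw [← Finset.sum_range_sub' (fun i => x i ^ 2 - x i * x (i + 1)) n]
    exact Finset.sum_congr rfl fun j _ => by ring
  rw [Finset.sum_sub_distrib] at tele
  have hxn1 : x (n + 1) = 0 := by rw [show n + 1 = 2 * m + 2 from by omega, hxend]
  have hQ : (∑ i ∈ Finset.Icc 1 n, (2 * x i * x i - x i * x (i - 1) - x i * x (i + 1)))
      = ∑ i ∈ Finset.range (n + 1), (x (i + 1) - x i) ^ 2 := by
    rw [hS, Finset.sum_range_succ (fun i => (x (i + 1) - x i) ^ 2) n, hxn1]
    rw [hx0, hxn1] at tele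
    ring_nf at tele ⊢
    linarith [tele]
  rw [hQ, show n + 1 = 2 * (m + 1) from by omega, pairsum, Finset.mul_sum]
  apply Finset.sum_le_sum
  intro j _
  rw [show 2 * j + 1 + 1 = 2 * j + 2 from by omega]
  nlinarith [sq_nonneg (x (2 * j + 2) - x (2 * j))]
end
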